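/- Let T ∈ ℕ, and for each t = 1,…,T let X_t ∈ ℝ^{n_t×d} and y_t ∈ ℝ^{n_t}. Let Λ_1,…,Λ_T ∈ ℝ^{d×d} be symmetric matrices with 0 ≺ Λ_1 ⪯ Λ_2 ⪯ ⋯ ⪯ Λ_T, and let the MultiVAW iterates be θ_t = A_t^{-1} b_{t-1}. Set ȳ = max_{t∈[T]} ‖y_t‖₂. Then for every θ ∈ ℝ^d, the regret satisfies R_T(θ) ≤ θᵀ Λ_T θ + ȳ² · Σ_{i=1}^d log( λ_i(A_T) / λ_i(Λ_1) ), where λ_i(M) denotes the i-th largest eigenvalue of a symmetric matrix M. -/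

import Mathlib

open Matrix Finset

noncomputable section

/-- `μ` lists the eigenvalues of the Hermitian matrix `A` in decreasing order:
`μ i` is the `i`-th largest eigenvalue of `A`. -/
def IsDecrEigSeq {d : ℕ} {A : Matrix (Fin d) (Fin d) ℝ} (hA : A.IsHermitian)
    (μ : Fin d → ℝ) : Prop :=
  Antitone μ ∧ ∃ σ : Equiv.Perm (Fin d), μ = hA.eigenvalues ∘ σ

namespace MVAW

variable {d m : ℕ}

lemma psd_dot {M : Matrix (Fin d) (Fin d) ℝ} (hM : M.PosSemidef) (v : Fin d → ℝ) :
    0 ≤ v ⬝ᵥ M *ᵥ v := by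
  simpa using hM.dotProduct_mulVec_nonneg v

lemma herm_transpose {M : Matrix (Fin d) (Fin d) ℝ} (hM : M.IsHermitian) : Mᵀ = M := by
  simpa [Matrix.conjTranspose_eq_transpose_of_trivial] using hM.eq

lemma mulVec_dot (X : Matrix (Fin m) (Fin d) ℝ) (u : Fin d → ℝ) (w : Fin m → ℝ) :
    (X *ᵥ u) ⬝ᵥ w = u ⬝ᵥ (Xᵀ *ᵥ w) := by
  rw [dotProduct_comm, dotProduct_mulVec, ← mulVec_transpose, dotProduct_comm]

lemma sym_dot {M : Matrix (Fin d) (Fin d) ℝ} (hM : Mᵀ = M) (u w : Fin d → ℝ) :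
    (M *ᵥ u) ⬝ᵥ w = u ⬝ᵥ (M *ᵥ w) := by
  rw [mulVec_dot, hM]

lemma transpose_mul_self_posSemidef (X : Matrix (Fin m) (Fin d) ℝ) :
    (Xᵀ * X).PosSemidef := by
  have := Matrix.posSemidef_conjTranspose_mul_self X
  rwa [Matrix.conjTranspose_eq_transpose_of_trivial] at this

/-- quadratic lower bound: `2 bᵀv - vᵀAv ≤ bᵀA⁻¹b` for positive definite `A`. -/
lemma quad_lower {A : Matrix (Fin d) (Fin d) ℝ} (hA : A.PosDef) (b v : Fin d → ℝ) :
    2 * (b ⬝ᵥ v) - v ⬝ᵥ A *ᵥ v ≤ b ⬝ᵥ A⁻¹ *ᵥ b := by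
  have hdet : IsUnit A.det := isUnit_iff_ne_zero.mpr hA.det_pos.ne'
  have hAinv : A * A⁻¹ = 1 := Matrix.mul_nonsing_inv _ hdet
  have hsym : Aᵀ = A := herm_transpose hA.isHermitian
  set u : Fin d → ℝ := A⁻¹ *ᵥ b with hu
  have hb : A *ᵥ u = b := by
    rw [hu, Matrix.mulVec_mulVec, hAinv, Matrix.one_mulVec]
  have h0 : 0 ≤ (v - u) ⬝ᵥ A *ᵥ (v - u) := psd_dot hA.posSemidef _
  have hA1 : u ⬝ᵥ A *ᵥ v = b ⬝ᵥ v := by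
    rw [← sym_dot hsym u v, hb]
  have hA2 : v ⬝ᵥ A *ᵥ u = b ⬝ᵥ v := by
    rw [hb, dotProduct_comm]
  have hA3 : u ⬝ᵥ A *ᵥ u = b ⬝ᵥ A⁻¹ *ᵥ b := by
    rw [hb, hu, dotProduct_comm]
  have hexp : (v - u) ⬝ᵥ A *ᵥ (v - u)
      = v ⬝ᵥ A *ᵥ v - 2 * (b ⬝ᵥ v) + b ⬝ᵥ A⁻¹ *ᵥ b := by
    rw [Matrix.mulVec_sub, dotProduct_sub, sub_dotProduct, sub_dotProduct, hA1, hA2, hA3]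
    ring
  linarith

/-- monotonicity of the inverse quadratic form -/
lemma inv_quad_mono {B P : Matrix (Fin d) (Fin d) ℝ} (hB : B.PosDef) (hP : P.PosSemidef)
    (bv : Fin d → ℝ) :
    bv ⬝ᵥ (B + P)⁻¹ *ᵥ bv ≤ bv ⬝ᵥ B⁻¹ *ᵥ bv := by
  have hBP : (B + P).PosDef := hB.add_posSemidef hP
  have hdet : IsUnit (B + P).det := isUnit_iff_ne_zero.mpr hBP.det_pos.ne'
  obtain ⟨v, hv⟩ : ∃ v, v = (B + P)⁻¹ *ᵥ bv := ⟨_, rfl⟩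
  rw [← hv]
  have hbv : (B + P) *ᵥ v = bv := by
    rw [hv, Matrix.mulVec_mulVec, Matrix.mul_nonsing_inv _ hdet, Matrix.one_mulVec]
  have h1 : v ⬝ᵥ B *ᵥ v + v ⬝ᵥ P *ᵥ v = bv ⬝ᵥ v := by
    rw [← hbv, Matrix.add_mulVec, add_dotProduct, dotProduct_comm (B *ᵥ v) v,
      dotProduct_comm (P *ᵥ v) v]
  have h2 : 0 ≤ v ⬝ᵥ P *ᵥ v := psd_dot hP v
  have h3 := quad_lower hB bv v
  have h4 : bv ⬝ᵥ v = v ⬝ᵥ bv := dotProduct_comm _ _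
  linarith

lemma loss_expand (X : Matrix (Fin m) (Fin d) ℝ) (v : Fin d → ℝ) (yv : Fin m → ℝ) :
    (X *ᵥ v - yv) ⬝ᵥ (X *ᵥ v - yv)
      = v ⬝ᵥ (Xᵀ * X) *ᵥ v - 2 * ((Xᵀ *ᵥ yv) ⬝ᵥ v) + yv ⬝ᵥ yv := by
  have h1 : (X *ᵥ v) ⬝ᵥ (X *ᵥ v) = v ⬝ᵥ (Xᵀ * X) *ᵥ v := by
    rw [mulVec_dot, Matrix.mulVec_mulVec]
  have h2 : (X *ᵥ v) ⬝ᵥ yv = (Xᵀ *ᵥ yv) ⬝ᵥ v := by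
    rw [mulVec_dot, dotProduct_comm]
  have h3 : yv ⬝ᵥ (X *ᵥ v) = (Xᵀ *ᵥ yv) ⬝ᵥ v := by
    rw [dotProduct_comm, h2]
  rw [dotProduct_sub, sub_dotProduct, sub_dotProduct, h1, h2, h3]
  ring

/-- the per-step VAW inequality, algebraic part. -/
lemma step_alg {B : Matrix (Fin d) (Fin d) ℝ} (hB : B.PosDef)
    (X : Matrix (Fin m) (Fin d) ℝ) (bv : Fin d → ℝ) (yv : Fin m → ℝ) :
    (X *ᵥ ((B + Xᵀ * X)⁻¹ *ᵥ bv) - yv) ⬝ᵥ (X *ᵥ ((B + Xᵀ * X)⁻¹ *ᵥ bv) - yv)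
      ≤ yv ⬝ᵥ yv
        - (bv + Xᵀ *ᵥ yv) ⬝ᵥ (B + Xᵀ * X)⁻¹ *ᵥ (bv + Xᵀ *ᵥ yv)
        + bv ⬝ᵥ B⁻¹ *ᵥ bv
        + (Xᵀ *ᵥ yv) ⬝ᵥ (B + Xᵀ * X)⁻¹ *ᵥ (Xᵀ *ᵥ yv) := by
  have hP : (Xᵀ * X).PosSemidef := transpose_mul_self_posSemidef X
  obtain ⟨A, hAdef⟩ : ∃ A', A' = B + Xᵀ * X := ⟨_, rfl⟩
  rw [← hAdef]
  have hApd : A.PosDef := hAdef ▸ hB.add_posSemidef hP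
  have hsymB : Bᵀ = B := herm_transpose hB.isHermitian
  have hsymA : Aᵀ = A := herm_transpose hApd.isHermitian
  have hsymP : (Xᵀ * X)ᵀ = Xᵀ * X := herm_transpose hP.isHermitian
  have hsymAinv : (A⁻¹)ᵀ = A⁻¹ := by rw [Matrix.transpose_nonsing_inv, hsymA]
  have hdetA : IsUnit A.det := isUnit_iff_ne_zero.mpr hApd.det_pos.ne'
  have hdetB : IsUnit B.det := isUnit_iff_ne_zero.mpr hB.det_pos.ne'
  have hAA : A * A⁻¹ = 1 := Matrix.mul_nonsing_inv _ hdetA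
  have hBB : B * B⁻¹ = 1 := Matrix.mul_nonsing_inv _ hdetB
  have hBB' : B⁻¹ * B = 1 := Matrix.nonsing_inv_mul _ hdetB
  obtain ⟨u, hu⟩ : ∃ u', u' = A⁻¹ *ᵥ bv := ⟨_, rfl⟩
  obtain ⟨z, hz⟩ : ∃ z', z' = Xᵀ *ᵥ yv := ⟨_, rfl⟩
  rw [← hu, ← hz]
  have hAu : A *ᵥ u = bv := by
    rw [hu, Matrix.mulVec_mulVec, hAA, Matrix.one_mulVec]
  have hbv : bv = B *ᵥ u + (Xᵀ * X) *ᵥ u := by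
    rw [← hAu, hAdef, Matrix.add_mulVec]
  have hBinvu : B⁻¹ *ᵥ (B *ᵥ u) = u := by
    rw [Matrix.mulVec_mulVec, hBB', Matrix.one_mulVec]
  -- loss expansion
  have hloss : (X *ᵥ u - yv) ⬝ᵥ (X *ᵥ u - yv)
      = u ⬝ᵥ (Xᵀ * X) *ᵥ u - 2 * (z ⬝ᵥ u) + yv ⬝ᵥ yv := by
    rw [loss_expand, hz]
  -- expansion of (bv+z)ᵀ A⁻¹ (bv+z)
  have hbz : (bv + z) ⬝ᵥ A⁻¹ *ᵥ (bv + z)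
      = bv ⬝ᵥ u + 2 * (z ⬝ᵥ u) + z ⬝ᵥ A⁻¹ *ᵥ z := by
    rw [Matrix.mulVec_add, dotProduct_add, add_dotProduct, add_dotProduct]
    have c1 : bv ⬝ᵥ A⁻¹ *ᵥ z = z ⬝ᵥ u := by
      rw [← sym_dot hsymAinv bv z, ← hu, dotProduct_comm]
    have c2 : z ⬝ᵥ A⁻¹ *ᵥ bv = z ⬝ᵥ u := by rw [← hu]
    have c3 : bv ⬝ᵥ A⁻¹ *ᵥ bv = bv ⬝ᵥ u := by rw [← hu]
    rw [c1, c2, c3]; ring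
  -- key inequality
  have hBinv : (B⁻¹).PosDef := hB.inv
  have hkey : u ⬝ᵥ (Xᵀ * X) *ᵥ u + bv ⬝ᵥ u ≤ bv ⬝ᵥ B⁻¹ *ᵥ bv := by
    have e1 : bv ⬝ᵥ u = u ⬝ᵥ B *ᵥ u + u ⬝ᵥ (Xᵀ * X) *ᵥ u := by
      rw [hbv, add_dotProduct, sym_dot hsymB, dotProduct_comm ((Xᵀ * X) *ᵥ u) u]
    have e2 : bv ⬝ᵥ B⁻¹ *ᵥ bv
        = u ⬝ᵥ B *ᵥ u + 2 * (u ⬝ᵥ (Xᵀ * X) *ᵥ u)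
          + ((Xᵀ * X) *ᵥ u) ⬝ᵥ B⁻¹ *ᵥ ((Xᵀ * X) *ᵥ u) := by
      obtain ⟨w, hw⟩ : ∃ w', w' = (Xᵀ * X) *ᵥ u := ⟨_, rfl⟩
      rw [hbv, ← hw, Matrix.mulVec_add, dotProduct_add, add_dotProduct, add_dotProduct]
      have d1 : (B *ᵥ u) ⬝ᵥ B⁻¹ *ᵥ (B *ᵥ u) = u ⬝ᵥ B *ᵥ u := by
        rw [hBinvu, dotProduct_comm]
      have d2 : (B *ᵥ u) ⬝ᵥ B⁻¹ *ᵥ w = u ⬝ᵥ (Xᵀ * X) *ᵥ u := by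
        rw [sym_dot hsymB, Matrix.mulVec_mulVec, hBB, Matrix.one_mulVec, hw]
      have d3 : w ⬝ᵥ B⁻¹ *ᵥ (B *ᵥ u) = u ⬝ᵥ (Xᵀ * X) *ᵥ u := by
        rw [hBinvu, hw, dotProduct_comm]
      rw [d1, d2, d3, hw]; ring
    have e3 : 0 ≤ ((Xᵀ * X) *ᵥ u) ⬝ᵥ B⁻¹ *ᵥ ((Xᵀ * X) *ᵥ u) :=
      psd_dot hBinv.posSemidef _
    linarith
  linarith [hloss, hbz, hkey]

/-- eigenvalues of a Hermitian matrix `M` with `M - 1` PSD are at least 1 -/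
lemma one_le_eigenvalues {M : Matrix (Fin d) (Fin d) ℝ} (hM : M.IsHermitian)
    (h : (M - 1).PosSemidef) (i : Fin d) : 1 ≤ hM.eigenvalues i := by
  have hv := hM.eigenvalues_eq i
  set v : Fin d → ℝ := ⇑(hM.eigenvectorBasis i) with hvdef
  have hnorm : ‖hM.eigenvectorBasis i‖ = 1 := hM.eigenvectorBasis.orthonormal.1 i
  have hvv : v ⬝ᵥ v = 1 := by
    have h1 : (inner ℝ (hM.eigenvectorBasis i) (hM.eigenvectorBasis i) : ℝ)
        = ‖hM.eigenvectorBasis i‖ ^ 2 := real_inner_self_eq_norm_sq _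
    have h2 : (inner ℝ (hM.eigenvectorBasis i) (hM.eigenvectorBasis i) : ℝ) = v ⬝ᵥ v := by
      simp only [PiLp.inner_apply, RCLike.inner_apply, conj_trivial, dotProduct, hvdef]
    rw [h2.symm, h1, hnorm]; norm_num
  have hval : hM.eigenvalues i = v ⬝ᵥ M *ᵥ v := by
    simpa using hv
  have hps := psd_dot h v
  rw [Matrix.sub_mulVec, Matrix.one_mulVec, dotProduct_sub, hvv] at hps
  linarith [hps, hval.ge, hval.le]

lemma one_le_det {M : Matrix (Fin d) (Fin d) ℝ} (hM : M.IsHermitian)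
    (h : (M - 1).PosSemidef) : 1 ≤ M.det := by
  have := hM.det_eq_prod_eigenvalues
  rw [this]
  have : ∀ i ∈ Finset.univ (α := Fin d), (1:ℝ) ≤ hM.eigenvalues i := fun i _ =>
    one_le_eigenvalues hM h i
  calc (1:ℝ) = ∏ _i : Fin d, 1 := by simp
    _ ≤ ∏ i, (hM.eigenvalues i : ℝ) := Finset.prod_le_prod (by simp) (by simpa using this)

lemma trace_eq_sum_eig {M : Matrix (Fin d) (Fin d) ℝ} (hM : M.IsHermitian) :
    M.trace = ∑ i, hM.eigenvalues i := by
  simpa using hM.trace_eq_sum_eigenvalues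

/-- `log det M ≤ trace M - d` for positive definite `M`. -/
lemma log_det_le_trace {M : Matrix (Fin d) (Fin d) ℝ} (hM : M.PosDef) :
    Real.log M.det ≤ M.trace - d := by
  have hei : ∀ i, 0 < hM.isHermitian.eigenvalues i := hM.eigenvalues_pos
  have hdet : M.det = ∏ i, hM.isHermitian.eigenvalues i := by
    simpa using hM.isHermitian.det_eq_prod_eigenvalues
  rw [hdet, Real.log_prod (fun i _ => (hei i).ne'), trace_eq_sum_eig hM.isHermitian]
  have hle : ∀ i ∈ Finset.univ (α := Fin d), Real.log (hM.isHermitian.eigenvalues i)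
      ≤ hM.isHermitian.eigenvalues i - 1 :=
    fun i _ => Real.log_le_sub_one_of_pos (hei i)
  calc ∑ i, Real.log (hM.isHermitian.eigenvalues i)
      ≤ ∑ i, (hM.isHermitian.eigenvalues i - 1) := Finset.sum_le_sum hle
    _ = (∑ i, hM.isHermitian.eigenvalues i) - d := by
        rw [Finset.sum_sub_distrib]; simp

lemma conj_isHermitian {B S : Matrix (Fin d) (Fin d) ℝ} (hB : Bᵀ = B) (hS : Sᵀ = S) :
    (S * B * S).IsHermitian := by
  rw [Matrix.IsHermitian, Matrix.conjTranspose_eq_transpose_of_trivial, Matrix.transpose_mul,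
    Matrix.transpose_mul, hB, hS, Matrix.mul_assoc]

lemma conj_posDef {B S : Matrix (Fin d) (Fin d) ℝ} (hB : B.PosDef) (hSsym : Sᵀ = S)
    (hdetS : IsUnit S.det) : (S * B * S).PosDef := by
  refine Matrix.PosDef.of_dotProduct_mulVec_pos ?_ ?_
  · exact conj_isHermitian (herm_transpose hB.isHermitian) hSsym
  · intro x hx
    have hSx : S *ᵥ x ≠ 0 := by
      intro h0
      apply hx
      have hxx : S⁻¹ *ᵥ (S *ᵥ x) = x := by
        rw [Matrix.mulVec_mulVec, Matrix.nonsing_inv_mul _ hdetS, Matrix.one_mulVec]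
      rw [← hxx, h0, Matrix.mulVec_zero]
    have hpos := hB.dotProduct_mulVec_pos hSx
    have hrw : dotProduct (star x) ((S * B * S) *ᵥ x)
        = dotProduct (star (S *ᵥ x)) (B *ᵥ (S *ᵥ x)) := by
      simp only [star_trivial]
      rw [Matrix.mul_assoc, ← Matrix.mulVec_mulVec, ← sym_dot hSsym x, ← Matrix.mulVec_mulVec]
    rw [hrw]
    exact hpos

open scoped MatrixOrder in
lemma exists_sqrt_psd {P : Matrix (Fin d) (Fin d) ℝ} (hpsd : P.PosSemidef) :
    ∃ S : Matrix (Fin d) (Fin d) ℝ, S * S = P ∧ Sᵀ = S :=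
  ⟨CFC.sqrt P, CFC.sqrt_mul_sqrt_self P hpsd.nonneg,
    herm_transpose (CFC.sqrt_nonneg P).posSemidef.isHermitian⟩

/-- determinant is monotone with respect to adding a PSD matrix to a PD matrix -/
lemma det_mono {B P : Matrix (Fin d) (Fin d) ℝ} (hB : B.PosDef) (hP : P.PosSemidef) :
    B.det ≤ (B + P).det := by
  have hpsd : (B⁻¹).PosSemidef := hB.inv.posSemidef
  obtain ⟨S, hS2, hSsym⟩ : ∃ S : Matrix (Fin d) (Fin d) ℝ, S * S = B⁻¹ ∧ Sᵀ = S :=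
    exists_sqrt_psd hpsd
  have hdetB : IsUnit B.det := isUnit_iff_ne_zero.mpr hB.det_pos.ne'
  have hBB : B * B⁻¹ = 1 := Matrix.mul_nonsing_inv _ hdetB
  have hBB' : B⁻¹ * B = 1 := Matrix.nonsing_inv_mul _ hdetB
  have h1 : S * B⁻¹ = B⁻¹ * S := by rw [← hS2, ← Matrix.mul_assoc]
  have hBS : B * S = S * B := by
    calc B * S = B * S * (B⁻¹ * B) := by rw [hBB', Matrix.mul_one]
    _ = B * (S * B⁻¹) * B := by simp only [Matrix.mul_assoc]
    _ = B * (B⁻¹ * S) * B := by rw [h1]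
    _ = S * B := by rw [← Matrix.mul_assoc, hBB, Matrix.one_mul]
  have hSBS : S * B * S = 1 := by
    calc S * B * S = B * S * S := by rw [hBS]
    _ = B * (S * S) := Matrix.mul_assoc _ _ _
    _ = 1 := by rw [hS2, hBB]
  have hQ : (S * P * S).PosSemidef := by
    have := hP.mul_mul_conjTranspose_same S
    rwa [Matrix.conjTranspose_eq_transpose_of_trivial, hSsym] at this
  have hM : S * (B + P) * S = 1 + S * P * S := by
    rw [Matrix.mul_add, Matrix.add_mul, hSBS]
  have hherm : (1 + S * P * S).IsHermitian := Matrix.isHermitian_one.add hQ.isHermitian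
  have hps : ((1 + S * P * S) - 1).PosSemidef := by simpa using hQ
  have hdet1 : 1 ≤ (1 + S * P * S).det := one_le_det hherm hps
  have hdSBS : S.det * B.det * S.det = 1 := by
    rw [← Matrix.det_mul, ← Matrix.det_mul, hSBS, Matrix.det_one]
  have hdM : S.det * (B + P).det * S.det = (1 + S * P * S).det := by
    rw [← Matrix.det_mul, ← Matrix.det_mul, hM]
  have hs2 : S.det * S.det * B.det = 1 := by linear_combination hdSBS
  have hspos : 0 < S.det * S.det := by nlinarith [hB.det_pos]
  have hm : S.det * S.det * (B + P).det = (1 + S * P * S).det := by linear_combination hdM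
  nlinarith [hB.det_pos]

lemma cs_bound (C : Matrix (Fin d) (Fin m) ℝ) (yv : Fin m → ℝ) :
    (C *ᵥ yv) ⬝ᵥ (C *ᵥ yv) ≤ (∑ i, ∑ j, C i j ^ 2) * (yv ⬝ᵥ yv) := by
  have h1 : ∀ i, ((C *ᵥ yv) i) ^ 2 ≤ (∑ j, C i j ^ 2) * (∑ j, (yv j) ^ 2) := by
    intro i
    have := Finset.sum_mul_sq_le_sq_mul_sq Finset.univ (fun j => C i j) yv
    simpa [Matrix.mulVec, dotProduct] using this
  calc (C *ᵥ yv) ⬝ᵥ (C *ᵥ yv) = ∑ i, ((C *ᵥ yv) i) ^ 2 := by simp [dotProduct, sq]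
  _ ≤ ∑ i, (∑ j, C i j ^ 2) * (∑ j, (yv j) ^ 2) := Finset.sum_le_sum (fun i _ => h1 i)
  _ = (∑ i, ∑ j, C i j ^ 2) * (yv ⬝ᵥ yv) := by
      rw [← Finset.sum_mul]
      congr 1
      simp [dotProduct, sq]

lemma sq_sum_eq_trace (C : Matrix (Fin d) (Fin m) ℝ) :
    ∑ i, ∑ j, C i j ^ 2 = (C * Cᵀ).trace := by
  simp [Matrix.trace, Matrix.mul_apply, Matrix.diag, sq]

/-- the log-det bound for the per-step quadratic term -/
lemma quad_log_bound {B : Matrix (Fin d) (Fin d) ℝ} (hB : B.PosDef)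
    (X : Matrix (Fin m) (Fin d) ℝ) (yv : Fin m → ℝ) :
    (Xᵀ *ᵥ yv) ⬝ᵥ (B + Xᵀ * X)⁻¹ *ᵥ (Xᵀ *ᵥ yv)
      ≤ (yv ⬝ᵥ yv) * (Real.log (B + Xᵀ * X).det - Real.log B.det) := by
  have hP : (Xᵀ * X).PosSemidef := transpose_mul_self_posSemidef X
  obtain ⟨A, hAdef⟩ : ∃ A', A' = B + Xᵀ * X := ⟨_, rfl⟩
  rw [← hAdef]
  have hApd : A.PosDef := hAdef ▸ hB.add_posSemidef hP
  have hdetA : IsUnit A.det := isUnit_iff_ne_zero.mpr hApd.det_pos.ne'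
  have hAA' : A⁻¹ * A = 1 := Matrix.nonsing_inv_mul _ hdetA
  have hpsd : (A⁻¹).PosSemidef := hApd.inv.posSemidef
  obtain ⟨S, hS2, hSsym⟩ : ∃ S : Matrix (Fin d) (Fin d) ℝ, S * S = A⁻¹ ∧ Sᵀ = S :=
    exists_sqrt_psd hpsd
  have hdetS2 : S.det * S.det = (A.det)⁻¹ := by
    rw [← Matrix.det_mul, hS2, Matrix.det_nonsing_inv]
    simp [Ring.inverse_eq_inv']
  have hdetSne : S.det ≠ 0 := by
    intro h0
    rw [h0, mul_zero] at hdetS2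
    exact (inv_ne_zero hApd.det_pos.ne') hdetS2.symm
  have hdetS : IsUnit S.det := isUnit_iff_ne_zero.mpr hdetSne
  have e1 : (Xᵀ *ᵥ yv) ⬝ᵥ A⁻¹ *ᵥ (Xᵀ *ᵥ yv)
      = ((S * Xᵀ) *ᵥ yv) ⬝ᵥ ((S * Xᵀ) *ᵥ yv) := by
    obtain ⟨z, hz⟩ : ∃ z, z = Xᵀ *ᵥ yv := ⟨_, rfl⟩
    have hzz : (S * Xᵀ) *ᵥ yv = S *ᵥ z := by rw [hz, Matrix.mulVec_mulVec]
    rw [← hz, hzz, ← hS2, ← Matrix.mulVec_mulVec, ← sym_dot hSsym z]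
  have e2 := cs_bound (S * Xᵀ) yv
  have e3 : (∑ i, ∑ j, (S * Xᵀ) i j ^ 2) = ((S * Xᵀ) * (S * Xᵀ)ᵀ).trace :=
    sq_sum_eq_trace _
  have e4 : (S * Xᵀ) * (S * Xᵀ)ᵀ = S * A * S - S * B * S := by
    rw [Matrix.transpose_mul, Matrix.transpose_transpose, hSsym, hAdef]
    rw [Matrix.mul_add, Matrix.add_mul]
    simp only [Matrix.mul_assoc]
    abel
  have e5 : (S * A * S).trace = (d : ℝ) := by
    rw [Matrix.trace_mul_comm (S * A) S, ← Matrix.mul_assoc, hS2, hAA', Matrix.trace_one]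
    simp
  have hSBS : (S * B * S).PosDef := conj_posDef hB hSsym hdetS
  have e7 : Real.log (S * B * S).det ≤ (S * B * S).trace - d := log_det_le_trace hSBS
  have e8 : (S * B * S).det = B.det * (A.det)⁻¹ := by
    rw [Matrix.det_mul, Matrix.det_mul]
    linear_combination B.det * hdetS2
  have e9 : Real.log (S * B * S).det = Real.log B.det - Real.log A.det := by
    rw [e8, Real.log_mul hB.det_pos.ne' (inv_ne_zero hApd.det_pos.ne'), Real.log_inv]
    ring
  have hyy : 0 ≤ yv ⬝ᵥ yv := by
    exact Finset.sum_nonneg fun i _ => mul_self_nonneg _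
  have e10 : ((S * Xᵀ) * (S * Xᵀ)ᵀ).trace ≤ Real.log A.det - Real.log B.det := by
    rw [e4, Matrix.trace_sub, e5]
    linarith [e7, e9.le, e9.ge]
  calc (Xᵀ *ᵥ yv) ⬝ᵥ A⁻¹ *ᵥ (Xᵀ *ᵥ yv)
      = ((S * Xᵀ) *ᵥ yv) ⬝ᵥ ((S * Xᵀ) *ᵥ yv) := e1
    _ ≤ (∑ i, ∑ j, (S * Xᵀ) i j ^ 2) * (yv ⬝ᵥ yv) := e2
    _ = ((S * Xᵀ) * (S * Xᵀ)ᵀ).trace * (yv ⬝ᵥ yv) := by rw [e3]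
    _ ≤ (Real.log A.det - Real.log B.det) * (yv ⬝ᵥ yv) :=
        mul_le_mul_of_nonneg_right e10 hyy
    _ = (yv ⬝ᵥ yv) * (Real.log A.det - Real.log B.det) := mul_comm _ _

/-- combined per-step inequality -/
lemma step_full {B : Matrix (Fin d) (Fin d) ℝ} (hB : B.PosDef)
    (X : Matrix (Fin m) (Fin d) ℝ) (bv : Fin d → ℝ) (yv : Fin m → ℝ) :
    (X *ᵥ ((B + Xᵀ * X)⁻¹ *ᵥ bv) - yv) ⬝ᵥ (X *ᵥ ((B + Xᵀ * X)⁻¹ *ᵥ bv) - yv)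
      ≤ yv ⬝ᵥ yv
        - (bv + Xᵀ *ᵥ yv) ⬝ᵥ (B + Xᵀ * X)⁻¹ *ᵥ (bv + Xᵀ *ᵥ yv)
        + bv ⬝ᵥ B⁻¹ *ᵥ bv
        + (yv ⬝ᵥ yv) * (Real.log (B + Xᵀ * X).det - Real.log B.det) := by
  have h1 := step_alg hB X bv yv
  have h2 := quad_log_bound hB X yv
  linarith

/-- telescoping sum over `Icc 1 N` -/
lemma sum_Icc_succ {M : Type*} [AddCommMonoid M] (f : ℕ → M) (N : ℕ) :
    ∑ t ∈ Icc 1 (N + 1), f t = (∑ t ∈ Icc 1 N, f t) + f (N + 1) := by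
  rw [← Finset.insert_Icc_right_eq_Icc_add_one (by omega : 1 ≤ N + 1),
    Finset.sum_insert (by simp)]
  exact add_comm _ _

lemma tele (H : ℕ → ℝ) : ∀ N : ℕ, ∑ t ∈ Icc 1 N, (H t - H (t - 1)) = H N - H 0
  | 0 => by simp
  | (N + 1) => by
      rw [sum_Icc_succ _ N, tele H N]
      simp only [Nat.add_sub_cancel]
      ring

lemma dot_sum_mulVec (s : Finset ℕ) (M : ℕ → Matrix (Fin d) (Fin d) ℝ) (v : Fin d → ℝ) :
    v ⬝ᵥ (∑ t ∈ s, M t) *ᵥ v = ∑ t ∈ s, v ⬝ᵥ (M t) *ᵥ v := by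
  induction s using Finset.cons_induction with
  | empty => simp
  | cons a s ha ih =>
      rw [Finset.sum_cons, Finset.sum_cons, Matrix.add_mulVec, dotProduct_add, ih]

lemma sum_dot (s : Finset ℕ) (w : ℕ → Fin d → ℝ) (v : Fin d → ℝ) :
    (∑ t ∈ s, w t) ⬝ᵥ v = ∑ t ∈ s, w t ⬝ᵥ v := by
  induction s using Finset.cons_induction with
  | empty => simp
  | cons a s ha ih =>
      rw [Finset.sum_cons, Finset.sum_cons, add_dotProduct, ih]

end MVAW

theorem multivaw_regret_bound
    (T d : ℕ) (hT : 1 ≤ T)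
    (n : ℕ → ℕ)
    (X : (t : ℕ) → Matrix (Fin (n t)) (Fin d) ℝ)
    (y : (t : ℕ) → Fin (n t) → ℝ)
    (Λ : ℕ → Matrix (Fin d) (Fin d) ℝ)
    (hΛsymm : ∀ t ∈ Icc 1 T, (Λ t).IsHermitian)
    (hΛ1pos : (Λ 1).PosDef)
    (hΛmono : ∀ t, 1 ≤ t → t + 1 ≤ T → (Λ (t + 1) - Λ t).PosSemidef)
    (A : ℕ → Matrix (Fin d) (Fin d) ℝ)
    (hA : ∀ t ∈ Icc 1 T, A t = Λ t + ∑ s ∈ Icc 1 t, (X s)ᵀ * X s)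
    (b : ℕ → (Fin d → ℝ))
    (hb : ∀ t ≤ T, b t = ∑ s ∈ Icc 1 t, (X s)ᵀ.mulVec (y s))
    (θ : ℕ → (Fin d → ℝ))
    (hθ : ∀ t ∈ Icc 1 T, θ t = (A t)⁻¹.mulVec (b (t - 1)))
    (ybar : ℝ)
    (hybar : ybar = (Icc 1 T).sup' (Finset.nonempty_Icc.mpr hT)
      (fun t => Real.sqrt (∑ i, (y t i) ^ 2)))
    (hAT : (A T).IsHermitian)
    (μA μΛ : Fin d → ℝ)
    (hμA : IsDecrEigSeq hAT μA)
    (hμΛ : IsDecrEigSeq hΛ1pos.isHermitian μΛ)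
    (θc : Fin d → ℝ) :
    (∑ t ∈ Icc 1 T, ∑ i, ((X t).mulVec (θ t) - y t) i ^ 2)
      - ∑ t ∈ Icc 1 T, ∑ i, ((X t).mulVec θc - y t) i ^ 2
    ≤ θc ⬝ᵥ (Λ T).mulVec θc + ybar ^ 2 * ∑ i, Real.log (μA i / μΛ i) := by
  classical
  have sumsq : ∀ (k : ℕ) (v : Fin k → ℝ), (∑ i, v i ^ 2) = v ⬝ᵥ v := fun k v => by
    simp [dotProduct, sq]
  have hIcc10 : (Icc 1 0 : Finset ℕ) = ∅ := Finset.Icc_eq_empty (by omega)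
  have hPsumPsd : ∀ (s : Finset ℕ), (∑ u ∈ s, (X u)ᵀ * X u).PosSemidef := by
    intro s
    refine Finset.sum_induction _ _ (fun a b ha hb => ha.add hb) Matrix.PosSemidef.zero ?_
    exact fun i _ => MVAW.transpose_mul_self_posSemidef (X i)
  have hΛsub : ∀ t, 1 ≤ t → t ≤ T → (Λ t - Λ 1).PosSemidef := by
    intro t
    induction t with
    | zero => intro h1 _; exact absurd h1 (by omega)
    | succ k ih =>
      intro h1 h2
      by_cases hk : k = 0
      · subst hk
        simpa using (Matrix.PosSemidef.zero : (0 : Matrix (Fin d) (Fin d) ℝ).PosSemidef)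
      · have hk1 : 1 ≤ k := by omega
        have hd : Λ (k + 1) - Λ 1 = (Λ (k + 1) - Λ k) + (Λ k - Λ 1) := by abel
        rw [hd]
        exact (hΛmono k hk1 h2).add (ih hk1 (by omega))
  have hΛpd : ∀ t, 1 ≤ t → t ≤ T → (Λ t).PosDef := by
    intro t h1 h2
    have hd : Λ t = Λ 1 + (Λ t - Λ 1) := by abel
    rw [hd]
    exact hΛ1pos.add_posSemidef (hΛsub t h1 h2)
  have hApd : ∀ t, 1 ≤ t → t ≤ T → (A t).PosDef := by
    intro t h1 h2
    rw [hA t (Finset.mem_Icc.mpr ⟨h1, h2⟩)]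
    exact (hΛpd t h1 h2).add_posSemidef (hPsumPsd _)
  have hAtilpd : ∀ t, 1 ≤ t → t ≤ T →
      (Λ t + ∑ s ∈ Icc 1 (t - 1), (X s)ᵀ * X s).PosDef := by
    intro t h1 h2
    exact (hΛpd t h1 h2).add_posSemidef (hPsumPsd _)
  have hAsplit : ∀ t, 1 ≤ t → t ≤ T →
      A t = (Λ t + ∑ s ∈ Icc 1 (t - 1), (X s)ᵀ * X s) + (X t)ᵀ * X t := by
    intro t h1 h2
    obtain ⟨k, rfl⟩ : ∃ k, t = k + 1 := ⟨t - 1, by omega⟩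
    rw [hA (k + 1) (Finset.mem_Icc.mpr ⟨h1, h2⟩), MVAW.sum_Icc_succ _ k]
    simp only [Nat.add_sub_cancel]
    rw [add_assoc]
  have hbsplit : ∀ t, 1 ≤ t → t ≤ T → b t = b (t - 1) + (X t)ᵀ *ᵥ y t := by
    intro t h1 h2
    obtain ⟨k, rfl⟩ : ∃ k, t = k + 1 := ⟨t - 1, by omega⟩
    simp only [Nat.add_sub_cancel]
    rw [hb (k + 1) h2, hb k (by omega), MVAW.sum_Icc_succ _ k]
  have hb0 : b 0 = 0 := by
    rw [hb 0 (by omega)]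
    simp [hIcc10]
  have hyle : ∀ t, 1 ≤ t → t ≤ T → y t ⬝ᵥ y t ≤ ybar ^ 2 := by
    intro t h1 h2
    have hs : Real.sqrt (∑ i, (y t i) ^ 2) ≤ ybar := by
      rw [hybar]
      exact Finset.le_sup' (fun t => Real.sqrt (∑ i, (y t i) ^ 2))
        (Finset.mem_Icc.mpr ⟨h1, h2⟩)
    have hnn : 0 ≤ ∑ i, (y t i) ^ 2 := Finset.sum_nonneg fun i _ => sq_nonneg _
    have hyt : y t ⬝ᵥ y t = Real.sqrt (∑ i, (y t i) ^ 2) ^ 2 := by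
      rw [Real.sq_sqrt hnn, sumsq]
    rw [hyt]
    exact pow_le_pow_left₀ (Real.sqrt_nonneg _) hs 2
  -- potential functions
  set F : ℕ → ℝ := fun k => if k = 0 then 0
    else (∑ s ∈ Icc 1 k, y s ⬝ᵥ y s) - b k ⬝ᵥ (A k)⁻¹ *ᵥ b k with hF
  set G : ℕ → ℝ := fun k => if k = 0 then Real.log (Λ 1).det
    else Real.log (A k).det with hG
  have hF0 : F 0 = 0 := by simp [hF]
  have hFpos : ∀ k, 1 ≤ k →
      F k = (∑ s ∈ Icc 1 k, y s ⬝ᵥ y s) - b k ⬝ᵥ (A k)⁻¹ *ᵥ b k := by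
    intro k hk
    simp [hF, show k ≠ 0 by omega]
  have hG0 : G 0 = Real.log (Λ 1).det := by simp [hG]
  have hGpos : ∀ k, 1 ≤ k → G k = Real.log (A k).det := by
    intro k hk
    simp [hG, show k ≠ 0 by omega]
  -- the per-step inequality
  have hstep : ∀ t, 1 ≤ t → t ≤ T →
      (X t *ᵥ θ t - y t) ⬝ᵥ (X t *ᵥ θ t - y t)
        ≤ F t - F (t - 1) + ybar ^ 2 * (G t - G (t - 1)) := by
    intro t h1 h2
    have hmem : t ∈ Icc 1 T := Finset.mem_Icc.mpr ⟨h1, h2⟩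
    have hAtil := hAtilpd t h1 h2
    have hSA := MVAW.step_full hAtil (X t) (b (t - 1)) (y t)
    rw [← hAsplit t h1 h2, ← hbsplit t h1 h2, ← hθ t hmem] at hSA
    have hprev : b (t - 1) ⬝ᵥ (Λ t + ∑ s ∈ Icc 1 (t - 1), (X s)ᵀ * X s)⁻¹ *ᵥ b (t - 1)
        ≤ (∑ s ∈ Icc 1 (t - 1), y s ⬝ᵥ y s) - F (t - 1) := by
      by_cases ht1 : t = 1
      · subst ht1
        norm_num [hb0, hF0, hIcc10]
      · have h2t : 2 ≤ t := by omega
        have hsp : Λ t + ∑ s ∈ Icc 1 (t - 1), (X s)ᵀ * X s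
            = A (t - 1) + (Λ t - Λ (t - 1)) := by
          rw [hA (t - 1) (Finset.mem_Icc.mpr ⟨by omega, by omega⟩)]
          abel
        have hPmono : (Λ t - Λ (t - 1)).PosSemidef := by
          have hm := hΛmono (t - 1) (by omega) (by omega)
          rwa [show t - 1 + 1 = t by omega] at hm
        rw [hsp, hFpos (t - 1) (by omega)]
        have hq := MVAW.inv_quad_mono (hApd (t - 1) (by omega) (by omega)) hPmono (b (t - 1))
        linarith
    have hdetAtil : 0 < (Λ t + ∑ s ∈ Icc 1 (t - 1), (X s)ᵀ * X s).det := hAtil.det_pos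
    have hlog1 : Real.log (Λ t + ∑ s ∈ Icc 1 (t - 1), (X s)ᵀ * X s).det
        ≤ Real.log (A t).det := by
      apply Real.log_le_log hdetAtil
      rw [hAsplit t h1 h2]
      exact MVAW.det_mono hAtil (MVAW.transpose_mul_self_posSemidef (X t))
    have hlog2 : G (t - 1) ≤ Real.log (Λ t + ∑ s ∈ Icc 1 (t - 1), (X s)ᵀ * X s).det := by
      by_cases ht1 : t = 1
      · subst ht1
        norm_num [hG0, hIcc10]
      · have h2t : 2 ≤ t := by omega
        have hsp : Λ t + ∑ s ∈ Icc 1 (t - 1), (X s)ᵀ * X s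
            = A (t - 1) + (Λ t - Λ (t - 1)) := by
          rw [hA (t - 1) (Finset.mem_Icc.mpr ⟨by omega, by omega⟩)]
          abel
        have hPmono : (Λ t - Λ (t - 1)).PosSemidef := by
          have hm := hΛmono (t - 1) (by omega) (by omega)
          rwa [show t - 1 + 1 = t by omega] at hm
        rw [hGpos (t - 1) (by omega)]
        apply Real.log_le_log (hApd (t - 1) (by omega) (by omega)).det_pos
        rw [hsp]
        exact MVAW.det_mono (hApd (t - 1) (by omega) (by omega)) hPmono
    have hyy0 : 0 ≤ y t ⬝ᵥ y t := Finset.sum_nonneg fun i _ => mul_self_nonneg _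
    have hyb := hyle t h1 h2
    have hSqt : (∑ s ∈ Icc 1 t, y s ⬝ᵥ y s)
        = (∑ s ∈ Icc 1 (t - 1), y s ⬝ᵥ y s) + y t ⬝ᵥ y t := by
      obtain ⟨k, rfl⟩ : ∃ k, t = k + 1 := ⟨t - 1, by omega⟩
      simp only [Nat.add_sub_cancel]
      exact MVAW.sum_Icc_succ _ k
    rw [hFpos t h1, hGpos t h1, hSqt]
    have hp1 : (y t ⬝ᵥ y t) * (Real.log (A t).det
          - Real.log (Λ t + ∑ s ∈ Icc 1 (t - 1), (X s)ᵀ * X s).det)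
        ≤ ybar ^ 2 * (Real.log (A t).det
          - Real.log (Λ t + ∑ s ∈ Icc 1 (t - 1), (X s)ᵀ * X s).det) :=
      mul_le_mul_of_nonneg_right hyb (by linarith)
    have hp2 : ybar ^ 2 * (Real.log (A t).det
          - Real.log (Λ t + ∑ s ∈ Icc 1 (t - 1), (X s)ᵀ * X s).det)
        ≤ ybar ^ 2 * (Real.log (A t).det - G (t - 1)) :=
      mul_le_mul_of_nonneg_left (by linarith) (sq_nonneg ybar)
    linarith [hSA, hprev, hp1, hp2]
  -- sum up
  have hsum1 : ∑ t ∈ Icc 1 T, (X t *ᵥ θ t - y t) ⬝ᵥ (X t *ᵥ θ t - y t)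
      ≤ F T + ybar ^ 2 * (G T - G 0) := by
    calc ∑ t ∈ Icc 1 T, (X t *ᵥ θ t - y t) ⬝ᵥ (X t *ᵥ θ t - y t)
        ≤ ∑ t ∈ Icc 1 T, (F t - F (t - 1) + ybar ^ 2 * (G t - G (t - 1))) :=
          Finset.sum_le_sum fun t ht =>
            hstep t (Finset.mem_Icc.mp ht).1 (Finset.mem_Icc.mp ht).2
      _ = (∑ t ∈ Icc 1 T, (F t - F (t - 1)))
            + ybar ^ 2 * (∑ t ∈ Icc 1 T, (G t - G (t - 1))) := by
          rw [Finset.sum_add_distrib, Finset.mul_sum]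
      _ = (F T - F 0) + ybar ^ 2 * (G T - G 0) := by rw [MVAW.tele, MVAW.tele]
      _ = F T + ybar ^ 2 * (G T - G 0) := by rw [hF0]; ring
  -- competitor lower bound
  have hsum2 : F T - θc ⬝ᵥ (Λ T) *ᵥ θc
      ≤ ∑ t ∈ Icc 1 T, (X t *ᵥ θc - y t) ⬝ᵥ (X t *ᵥ θc - y t) := by
    have hexp : ∑ t ∈ Icc 1 T, (X t *ᵥ θc - y t) ⬝ᵥ (X t *ᵥ θc - y t)
        = θc ⬝ᵥ (∑ s ∈ Icc 1 T, (X s)ᵀ * X s) *ᵥ θc - 2 * (b T ⬝ᵥ θc)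
          + ∑ s ∈ Icc 1 T, y s ⬝ᵥ y s := by
      rw [MVAW.dot_sum_mulVec, hb T le_rfl, MVAW.sum_dot, Finset.mul_sum,
        ← Finset.sum_sub_distrib, ← Finset.sum_add_distrib]
      exact Finset.sum_congr rfl fun t _ => MVAW.loss_expand (X t) θc (y t)
    have hql := MVAW.quad_lower (hApd T hT le_rfl) (b T) θc
    have hATexp : θc ⬝ᵥ (A T) *ᵥ θc
        = θc ⬝ᵥ (Λ T) *ᵥ θc + θc ⬝ᵥ (∑ s ∈ Icc 1 T, (X s)ᵀ * X s) *ᵥ θc := by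
      rw [hA T (Finset.mem_Icc.mpr ⟨hT, le_rfl⟩), Matrix.add_mulVec, dotProduct_add]
    rw [hexp, hFpos T hT]
    linarith
  -- eigenvalue bookkeeping
  have hATpd : (A T).PosDef := hApd T hT le_rfl
  have heigA : ∀ i, 0 < hAT.eigenvalues i := fun i => hATpd.eigenvalues_pos i
  have heigΛ : ∀ i, 0 < hΛ1pos.isHermitian.eigenvalues i := fun i =>
    hΛ1pos.eigenvalues_pos i
  obtain ⟨-, σA, hσA⟩ := hμA
  obtain ⟨-, σΛ, hσΛ⟩ := hμΛ
  have hμApos : ∀ i, 0 < μA i := by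
    intro i; rw [hσA]; exact heigA (σA i)
  have hμΛpos : ∀ i, 0 < μΛ i := by
    intro i; rw [hσΛ]; exact heigΛ (σΛ i)
  have heig : ∑ i, Real.log (μA i / μΛ i)
      = Real.log (A T).det - Real.log (Λ 1).det := by
    have h1 : ∀ i, Real.log (μA i / μΛ i) = Real.log (μA i) - Real.log (μΛ i) :=
      fun i => Real.log_div (hμApos i).ne' (hμΛpos i).ne'
    rw [Finset.sum_congr rfl fun i _ => h1 i, Finset.sum_sub_distrib]
    have h2 : ∑ i, Real.log (μA i) = Real.log (A T).det := by
      rw [hσA]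
      calc ∑ i, Real.log ((hAT.eigenvalues ∘ σA) i)
          = ∑ i, Real.log (hAT.eigenvalues (σA i)) := rfl
        _ = ∑ i, Real.log (hAT.eigenvalues i) :=
            Equiv.sum_comp σA (fun j => Real.log (hAT.eigenvalues j))
        _ = Real.log (A T).det := by
            rw [show (A T).det = ∏ i, hAT.eigenvalues i from by
              simpa using hAT.det_eq_prod_eigenvalues]
            exact (Real.log_prod fun i _ => (heigA i).ne').symm
    have h3 : ∑ i, Real.log (μΛ i) = Real.log (Λ 1).det := by
      rw [hσΛ]
      calc ∑ i, Real.log ((hΛ1pos.isHermitian.eigenvalues ∘ σΛ) i)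
          = ∑ i, Real.log (hΛ1pos.isHermitian.eigenvalues (σΛ i)) := rfl
        _ = ∑ i, Real.log (hΛ1pos.isHermitian.eigenvalues i) :=
            Equiv.sum_comp σΛ (fun j => Real.log (hΛ1pos.isHermitian.eigenvalues j))
        _ = Real.log (Λ 1).det := by
            rw [show (Λ 1).det = ∏ i, hΛ1pos.isHermitian.eigenvalues i from by
              simpa using hΛ1pos.isHermitian.det_eq_prod_eigenvalues]
            exact (Real.log_prod fun i _ => (heigΛ i).ne').symm
    rw [h2, h3]
  -- conclusion
  have hc1 : (∑ t ∈ Icc 1 T, ∑ i, ((X t).mulVec (θ t) - y t) i ^ 2)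
      = ∑ t ∈ Icc 1 T, (X t *ᵥ θ t - y t) ⬝ᵥ (X t *ᵥ θ t - y t) :=
    Finset.sum_congr rfl fun t _ => sumsq _ _
  have hc2 : (∑ t ∈ Icc 1 T, ∑ i, ((X t).mulVec θc - y t) i ^ 2)
      = ∑ t ∈ Icc 1 T, (X t *ᵥ θc - y t) ⬝ᵥ (X t *ᵥ θc - y t) :=
    Finset.sum_congr rfl fun t _ => sumsq _ _
  rw [hc1, hc2, heig]
  rw [hGpos T hT, hG0] at hsum1
  linarith [hsum1, hsum2]

end
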